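/- In the setting of the L-closure construction, P(Ŵ) = K, the intersection K ∩ P(L) equals P(L ∩ Ŵ), and P(L ∩ Ŵ) is dense in K. -/

import Mathlib

open Filter Topology

/-- In a finite-dimensional real normed space, a closed additive subgroup contains all
real multiples of its sufficiently small elements. -/
theorem aux_eps {E : Type*} [NormedAddCommGroup E] [NormedSpace ℝ E] [FiniteDimensional ℝ E]
    (G : AddSubgroup E) (hG : IsClosed (G : Set E)) :
    ∃ ε > 0, ∀ x ∈ G, ‖x‖ < ε → ∀ t : ℝ, t • x ∈ G := by
  classical
  set U : Submodule ℝ E :=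
    { carrier := {x | ∀ t : ℝ, t • x ∈ G}
      add_mem' := fun hx hy t => by simpa [smul_add] using G.add_mem (hx t) (hy t)
      zero_mem' := fun t => by simpa using G.zero_mem
      smul_mem' := fun c x hx t => by simpa [smul_smul] using hx (t * c) } with hUdef
  have hUmem : ∀ x : E, x ∈ U ↔ ∀ t : ℝ, t • x ∈ G := fun x => Iff.rfl
  obtain ⟨U', hcompl⟩ := Submodule.exists_isCompl U
  -- Step 1: G ∩ U' is discrete near 0
  have step1 : ∃ δ > 0, ∀ x : E, x ∈ G → x ∈ U' → ‖x‖ < δ → x = 0 := by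
    by_contra h
    push_neg at h
    have hseq : ∀ n : ℕ, ∃ x : E, x ∈ G ∧ x ∈ U' ∧ ‖x‖ < 1 / (n + 1) ∧ x ≠ 0 := by
      intro n
      obtain ⟨x, hx1, hx2, hx3, hx4⟩ := h (1 / (n + 1)) (by positivity)
      exact ⟨x, hx1, hx2, hx3, hx4⟩
    choose x hxG hxU' hxn hx0 using hseq
    have hxnorm : ∀ n, ‖x n‖ ≠ 0 := fun n => norm_ne_zero_iff.2 (hx0 n)
    set y : ℕ → E := fun n => (‖x n‖)⁻¹ • x n with hy
    have hy1 : ∀ n, ‖y n‖ = 1 := by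
      intro n
      rw [hy]
      simp only [norm_smul, norm_inv, norm_norm]
      exact inv_mul_cancel₀ (hxnorm n)
    have hyU' : ∀ n, y n ∈ U' := fun n => U'.smul_mem _ (hxU' n)
    have hScpt : IsCompact (Metric.sphere (0 : E) 1 ∩ (U' : Set E)) :=
      (isCompact_sphere 0 1).inter_right U'.closed_of_finiteDimensional
    have hymem : ∀ n, y n ∈ Metric.sphere (0 : E) 1 ∩ (U' : Set E) := by
      intro n
      exact ⟨by simpa [mem_sphere_zero_iff_norm] using hy1 n, hyU' n⟩
    obtain ⟨ylim, hylS, φ, hφ, hyt⟩ := hScpt.tendsto_subseq hymem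
    have hxto0 : Tendsto (fun n => ‖x (φ n)‖) atTop (𝓝 0) := by
      apply squeeze_zero (fun n => norm_nonneg _) (g := fun n : ℕ => 1 / (n + 1))
        (fun n => ?_) tendsto_one_div_add_atTop_nhds_zero_nat
      have h1 : ‖x (φ n)‖ ≤ 1 / ((φ n : ℝ) + 1) := (hxn (φ n)).le
      have h2 : (1 : ℝ) / ((φ n : ℝ) + 1) ≤ 1 / ((n : ℝ) + 1) := by
        apply one_div_le_one_div_of_le (by positivity)
        have h3 : (n : ℝ) ≤ (φ n : ℝ) := Nat.cast_le.2 hφ.le_apply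
        linarith
      linarith
    have hylimU : ylim ∈ U := by
      rw [hUmem]
      intro t
      set c : ℕ → ℝ := fun n => (⌊t / ‖x (φ n)‖⌋ : ℝ) * ‖x (φ n)‖ with hcdef
      have hmemG : ∀ n, c n • y (φ n) ∈ (G : Set E) := by
        intro n
        have h1 : (⌊t / ‖x (φ n)‖⌋) • x (φ n) ∈ G := G.zsmul_mem (hxG _) _
        have h2 : c n • y (φ n) = (⌊t / ‖x (φ n)‖⌋) • x (φ n) := by
          rw [hcdef]
          simp only
          rw [mul_smul, hy]
          simp only
          rw [smul_inv_smul₀ (hxnorm _), ← Int.cast_smul_eq_zsmul ℝ]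
        rw [h2]; exact h1
      have hct : Tendsto c atTop (𝓝 t) := by
        have hbound : ∀ n, |c n - t| ≤ ‖x (φ n)‖ := by
          intro n
          set a := ‖x (φ n)‖ with ha
          have ha0 : 0 < a := (hxnorm _).lt_of_le' (norm_nonneg _)
          have h1 : (⌊t / a⌋ : ℝ) * a ≤ t := by
            have := Int.floor_le (t / a)
            calc (⌊t / a⌋ : ℝ) * a ≤ (t / a) * a := by nlinarith
              _ = t := by field_simp
          have h2 : t < (⌊t / a⌋ : ℝ) * a + a := by
            have := Int.lt_floor_add_one (t / a)
            have h3 : t / a < (⌊t / a⌋ : ℝ) + 1 := this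
            calc t = (t / a) * a := by field_simp
              _ < ((⌊t / a⌋ : ℝ) + 1) * a := by nlinarith
              _ = (⌊t / a⌋ : ℝ) * a + a := by ring
          rw [abs_le]
          constructor <;> simp only [hcdef] <;> nlinarith
        have : Tendsto (fun n => |c n - t|) atTop (𝓝 0) :=
          squeeze_zero (fun n => abs_nonneg _) hbound hxto0
        rw [tendsto_iff_dist_tendsto_zero]
        simpa [Real.dist_eq] using this
      have hlim : Tendsto (fun n => c n • y (φ n)) atTop (𝓝 (t • ylim)) := hct.smul hyt
      exact hG.mem_of_tendsto hlim (Filter.Eventually.of_forall hmemG)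
    have hylimU' : ylim ∈ U' := hylS.2
    have : ylim = 0 := Submodule.disjoint_def.mp hcompl.disjoint ylim hylimU hylimU'
    have h1 : ‖ylim‖ = 1 := by simpa [mem_sphere_zero_iff_norm] using hylS.1
    rw [this] at h1
    simp at h1
  obtain ⟨δ, hδ, hdisc⟩ := step1
  -- Step 2: project onto U' and use discreteness
  set p : E →ₗ[ℝ] E := U'.subtype ∘ₗ (U'.linearProjOfIsCompl U hcompl.symm) with hpdef
  have hpU' : ∀ x : E, p x ∈ U' := fun x => (U'.linearProjOfIsCompl U hcompl.symm x).2
  have hsubU : ∀ x : E, x - p x ∈ U := by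
    intro x
    have := Submodule.projection_add_projection_eq_self hcompl x
    have h2 : x - p x = (U.linearProjOfIsCompl U' hcompl x : E) := by
      have hp : p x = (U'.linearProjOfIsCompl U hcompl.symm x : E) := rfl
      rw [hp]
      exact sub_eq_of_eq_add this.symm
    rw [h2]
    exact (U.linearProjOfIsCompl U' hcompl x).2
  set cp := LinearMap.toContinuousLinearMap p with hcp
  set C : ℝ := ‖cp‖ + 1 with hC
  have hC0 : 0 < C := by positivity
  have hbound : ∀ x : E, ‖p x‖ ≤ C * ‖x‖ := by
    intro x
    calc ‖p x‖ = ‖cp x‖ := rfl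
      _ ≤ ‖cp‖ * ‖x‖ := cp.le_opNorm x
      _ ≤ C * ‖x‖ := by
          apply mul_le_mul_of_nonneg_right _ (norm_nonneg x)
          rw [hC]; linarith
  refine ⟨δ / C, by positivity, ?_⟩
  intro z hz hzn t
  have h1 : z - p z ∈ U := hsubU z
  have h1G : z - p z ∈ G := by simpa using ((hUmem _).1 h1) 1
  have h2 : p z ∈ G := by
    rw [show p z = z - (z - p z) from (sub_sub_cancel z (p z)).symm]
    exact G.sub_mem hz h1G
  have h3 : ‖p z‖ < δ := by
    calc ‖p z‖ ≤ C * ‖z‖ := hbound z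
      _ < C * (δ / C) := by exact mul_lt_mul_of_pos_left hzn hC0
      _ = δ := by field_simp
  have h4 : p z = 0 := hdisc _ h2 (hpU' z) h3
  have h5 : z ∈ U := by
    rw [show z = z - p z by rw [h4, sub_zero]]
    exact h1
  exact (hUmem _).1 h5 t

/-- Density of `D ∩ K` in `K`, the identity component of a closed subgroup `G` in which
`D` is dense. -/
theorem aux_dense {E : Type*} [NormedAddCommGroup E] [NormedSpace ℝ E] [FiniteDimensional ℝ E]
    (G : AddSubgroup E) (hG : IsClosed (G : Set E)) (D : Set E) (hDsub : D ⊆ (G : Set E))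
    (hDd : (G : Set E) ⊆ closure D) :
    connectedComponentIn (G : Set E) 0 ⊆ closure (D ∩ connectedComponentIn (G : Set E) 0) := by
  obtain ⟨ε, hε, hkey⟩ := aux_eps G hG
  set K := connectedComponentIn (G : Set E) 0 with hK
  have hKG : K ⊆ (G : Set E) := connectedComponentIn_subset _ _
  have h0K : (0 : E) ∈ K := mem_connectedComponentIn G.zero_mem
  have hUK : ∀ u : E, (∀ t : ℝ, t • u ∈ G) → u ∈ K := by
    intro u hu
    have hcont : Continuous fun t : ℝ => t • u := continuous_id.smul continuous_const
    have hpre : IsPreconnected (Set.range fun t : ℝ => t • u) := by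
      rw [← Set.image_univ]
      exact isPreconnected_univ.image _ hcont.continuousOn
    have hsub : (Set.range fun t : ℝ => t • u) ⊆ (G : Set E) := by
      rintro _ ⟨t, rfl⟩; exact hu t
    have h0 : (0 : E) ∈ Set.range fun t : ℝ => t • u := ⟨0, zero_smul ℝ u⟩
    have := hpre.subset_connectedComponentIn h0 hsub
    exact this ⟨1, one_smul ℝ u⟩
  intro k hkK
  rw [Metric.mem_closure_iff]
  intro ε' hε'
  have hkG : k ∈ closure D := hDd (hKG hkK)
  obtain ⟨d, hdD, hdist⟩ := Metric.mem_closure_iff.1 hkG (min ε ε') (lt_min hε hε')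
  have hdG : d ∈ G := hDsub hdD
  have hdkG : d - k ∈ G := G.sub_mem hdG (hKG hkK)
  have hnorm : ‖d - k‖ < ε := by
    have : dist k d < ε := lt_of_lt_of_le hdist (min_le_left _ _)
    rw [dist_eq_norm] at this
    rw [← norm_neg]
    simpa [neg_sub] using this
  have hdkK : d - k ∈ K := hUK _ (fun t => hkey _ hdkG hnorm t)
  have hdK : d ∈ K := by
    have himg : IsPreconnected ((fun z => k + z) '' K) :=
      isPreconnected_connectedComponentIn.image _ (continuous_const.add continuous_id).continuousOn
    have hsub : ((fun z => k + z) '' K) ⊆ (G : Set E) := by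
      rintro _ ⟨z, hz, rfl⟩
      exact G.add_mem (hKG hkK) (hKG hz)
    have hkmem : k ∈ (fun z => k + z) '' K := ⟨0, h0K, add_zero k⟩
    have hsubK : ((fun z => k + z) '' K) ⊆ connectedComponentIn (G : Set E) k :=
      himg.subset_connectedComponentIn hkmem hsub
    have heq : connectedComponentIn (G : Set E) 0 = connectedComponentIn (G : Set E) k :=
      connectedComponentIn_eq hkK
    have : d ∈ connectedComponentIn (G : Set E) k :=
      hsubK ⟨d - k, hdkK, show k + (d - k) = d by abel⟩
    rw [hK, heq]
    exact this
  exact ⟨d, ⟨hdD, hdK⟩, lt_of_lt_of_le hdist (min_le_right _ _)⟩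

/-- In the L-closure construction: P(Ŵ) = K, K ∩ P(L) = P(L ∩ Ŵ), and P(L ∩ Ŵ) is
dense in K, where K is the identity component of the closure of P(L) in V/W and
Ŵ = P⁻¹(K). -/
theorem stmt_14 {V : Type*} [NormedAddCommGroup V] [NormedSpace ℝ V]
    [FiniteDimensional ℝ V] (L : AddSubgroup V)
    (hL : ∃ b : Module.Basis (Fin (Module.finrank ℝ V)) ℝ V,
      AddSubgroup.closure (Set.range ⇑b) = L)
    (W : Submodule ℝ V)
    (K : Set (V ⧸ W))
    (hK : K = connectedComponentIn (closure (⇑W.mkQ '' (L : Set V))) 0) :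
    ⇑W.mkQ '' (⇑W.mkQ ⁻¹' K) = K ∧
    K ∩ (⇑W.mkQ '' (L : Set V)) = ⇑W.mkQ '' ((L : Set V) ∩ ⇑W.mkQ ⁻¹' K) ∧
    K ⊆ closure (⇑W.mkQ '' ((L : Set V) ∩ ⇑W.mkQ ⁻¹' K)) := by
  haveI hWc : IsClosed (W : Set V) := W.closed_of_finiteDimensional
  letI : NormedAddCommGroup (V ⧸ W) := Submodule.Quotient.normedAddCommGroup W
  letI : NormedSpace ℝ (V ⧸ W) := Submodule.Quotient.normedSpace W ℝ
  refine ⟨Set.image_preimage_eq K (Submodule.mkQ_surjective W), ?_, ?_⟩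
  · rw [Set.image_inter_preimage]
    exact Set.inter_comm _ _
  · rw [Set.image_inter_preimage]
    set D : Set (V ⧸ W) := ⇑W.mkQ '' (L : Set V) with hD
    set G : AddSubgroup (V ⧸ W) := (AddSubgroup.map W.mkQ.toAddMonoidHom L).topologicalClosure
      with hG
    have hGcoe : (G : Set (V ⧸ W)) = closure D := by
      rw [hG]
      have : ((AddSubgroup.map W.mkQ.toAddMonoidHom L : AddSubgroup (V ⧸ W)) : Set (V ⧸ W)) =
          D := by
        rw [AddSubgroup.coe_map, hD]
        rfl
      rw [AddSubgroup.topologicalClosure_coe, this]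
    have hGclosed : IsClosed (G : Set (V ⧸ W)) := by
      rw [hGcoe]; exact isClosed_closure
    have hDsub : D ⊆ (G : Set (V ⧸ W)) := by rw [hGcoe]; exact subset_closure
    have hDd : (G : Set (V ⧸ W)) ⊆ closure D := by rw [hGcoe]
    have hKG : K = connectedComponentIn (G : Set (V ⧸ W)) 0 := by rw [hK, hGcoe]
    have h := aux_dense G hGclosed D hDsub hDd
    rw [← hKG] at h
    intro x hx
    exact closure_mono (Set.inter_subset_inter_left _ (by rw [hD])) (h hx)
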